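/- Let $X$ be a real-valued integrable random variable and let $s, f : \mathbb{R} \to \mathbb{R}$ be bounded measurable functions with $s$ nonincreasing, $f$ nondecreasing, and $\mathbb{E}[s(X)] = 1$. If additionally $\mathrm{Var}$-type nondegeneracy holds, namely $s(X)$ and $f(X)$ are not almost surely constant and there exist reals $u < v$ in the support of $X$ with $s(u) > s(v)$ and $f(u) < f(v)$ each holding on sets of positive probability, then $\mathbb{E}[s(X) f(X)] < \mathbb{E}[f(X)]$. -/

import Mathlib

open MeasureTheory

/-- If a set has positive measure and a property holds a.e., then they meet. -/
lemma exists_mem_of_measure_pos_of_ae {Ω : Type*} [MeasurableSpace Ω]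
    {μ : Measure Ω} {A : Set Ω} {p : Ω → Prop}
    (hA : 0 < μ A) (hp : ∀ᵐ ω ∂μ, p ω) : ∃ ω, ω ∈ A ∧ p ω := by
  by_contra h
  push_neg at h
  have hsub : A ⊆ {ω | ¬ p ω} := fun ω hω => h ω hω
  have : μ A ≤ μ {ω | ¬ p ω} := measure_mono hsub
  rw [ae_iff] at hp
  rw [hp] at this
  exact absurd (le_antisymm this zero_le).symm hA.ne

/-- Strict Chebyshev correlation inequality: if `s` is a bounded measurable
nonincreasing weight with `E[s(X)] = 1`, `f` is bounded measurable
nondecreasing, and there exist `u < v` with `s u > s v`, `f u < f v`, and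
`X ≤ u`, `X ≥ v` each occurring with positive probability, then
`E[s(X) f(X)] < E[f(X)]`. -/
theorem strict_chebyshev_bias
    {Ω : Type*} [MeasurableSpace Ω] (μ : Measure Ω) [IsProbabilityMeasure μ]
    (X : Ω → ℝ) (hX_meas : Measurable X) (hX_int : Integrable X μ)
    (s f : ℝ → ℝ)
    (hs_meas : Measurable s) (hf_meas : Measurable f)
    (Cs : ℝ) (hs_bdd : ∀ y, |s y| ≤ Cs)
    (Cf : ℝ) (hf_bdd : ∀ y, |f y| ≤ Cf)
    (hs_anti : Antitone s) (hf_mono : Monotone f)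
    (hs_mean : ∫ ω, s (X ω) ∂μ = 1)
    (u v : ℝ) (huv : u < v)
    (hs_strict : s v < s u) (hf_strict : f u < f v)
    (hu_pos : 0 < μ {ω | X ω ≤ u}) (hv_pos : 0 < μ {ω | v ≤ X ω}) :
    ∫ ω, s (X ω) * f (X ω) ∂μ < ∫ ω, f (X ω) ∂μ := by
  -- integrabilities
  have hsX_meas : Measurable fun ω => s (X ω) := hs_meas.comp hX_meas
  have hfX_meas : Measurable fun ω => f (X ω) := hf_meas.comp hX_meas
  have hs_int : Integrable (fun ω => s (X ω)) μ := by
    refine Integrable.mono' (integrable_const Cs) hsX_meas.aestronglyMeasurable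
      (Filter.Eventually.of_forall fun ω => ?_)
    simpa [Real.norm_eq_abs] using hs_bdd (X ω)
  have hf_int : Integrable (fun ω => f (X ω)) μ := by
    refine Integrable.mono' (integrable_const Cf) hfX_meas.aestronglyMeasurable
      (Filter.Eventually.of_forall fun ω => ?_)
    simpa [Real.norm_eq_abs] using hf_bdd (X ω)
  have hCs0 : 0 ≤ Cs := (abs_nonneg _).trans (hs_bdd 0)
  have hsf_int : Integrable (fun ω => s (X ω) * f (X ω)) μ := by
    refine Integrable.mono' (integrable_const (Cs * Cf))
      (hsX_meas.mul hfX_meas).aestronglyMeasurable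
      (Filter.Eventually.of_forall fun ω => ?_)
    rw [Real.norm_eq_abs, abs_mul]
    exact mul_le_mul (hs_bdd _) (hf_bdd _) (abs_nonneg _) hCs0
  -- positive measure of {s (X ω) > 1}
  have hP_pos : 0 < μ {ω | 1 < s (X ω)} := by
    by_cases hsu : 1 < s u
    · refine lt_of_lt_of_le hu_pos (measure_mono fun ω hω => ?_)
      exact lt_of_lt_of_le hsu (hs_anti hω)
    · push_neg at hsu
      by_contra hP
      push_neg at hP
      have hP0 : μ {ω | 1 < s (X ω)} = 0 := le_antisymm hP zero_le
      have hae : ∀ᵐ ω ∂μ, s (X ω) ≤ 1 := by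
        rw [ae_iff]
        convert hP0 using 2
        ext ω; simp
      have hone : Integrable (fun ω => 1 - s (X ω)) μ := (integrable_const 1).sub hs_int
      have hzero : ∫ ω, (1 - s (X ω)) ∂μ = 0 := by
        rw [integral_sub (integrable_const 1) hs_int, hs_mean]
        simp
      have haezero : (fun ω => 1 - s (X ω)) =ᵐ[μ] 0 := by
        rw [← integral_eq_zero_iff_of_nonneg_ae ?_ hone]
        · exact hzero
        · filter_upwards [hae] with ω hω
          simpa using hω
      obtain ⟨ω, hωB, hω1⟩ := exists_mem_of_measure_pos_of_ae hv_pos haezero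
      have hsv1 : s (X ω) ≤ s v := hs_anti hωB
      have : s (X ω) = 1 := by
        have := hω1
        simp only [Pi.zero_apply] at this
        linarith
      have hsvlt : s v < 1 := lt_of_lt_of_le hs_strict hsu
      linarith
  -- choose the separating constant c
  obtain ⟨ω₀, hω₀⟩ : ∃ ω, 1 < s (X ω) := by
    by_contra h
    push_neg at h
    have : μ {ω | 1 < s (X ω)} = 0 := by
      convert measure_empty (μ := μ)
      ext ω; simp only [Set.mem_setOf_eq, Set.mem_empty_iff_false, iff_false, not_lt]
      exact h ω
    rw [this] at hP_pos; exact lt_irrefl _ hP_pos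
  set S : Set ℝ := f '' {x | 1 < s x} with hS
  have hS_ne : S.Nonempty := ⟨f (X ω₀), ⟨X ω₀, hω₀, rfl⟩⟩
  have hS_bdd : BddAbove S := ⟨Cf, fun y ⟨x, _, hxy⟩ => hxy ▸ (abs_le.mp (hf_bdd x)).2⟩
  set c : ℝ := sSup S with hc
  have hc_ub : ∀ x, 1 < s x → f x ≤ c := fun x hx => le_csSup hS_bdd ⟨x, hx, rfl⟩
  have hc_lb : ∀ x, s x < 1 → c ≤ f x := by
    intro x hx
    refine csSup_le hS_ne ?_
    rintro y ⟨z, hz, rfl⟩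
    refine hf_mono (le_of_lt ?_)
    by_contra h
    push_neg at h
    exact absurd (hs_anti h) (not_le.mpr (lt_trans hx hz))
  -- the auxiliary function g
  set g : Ω → ℝ := fun ω => (s (X ω) - 1) * (f (X ω) - c) with hg
  have hg_nonpos : ∀ ω, g ω ≤ 0 := by
    intro ω
    rcases lt_trichotomy (s (X ω)) 1 with h | h | h
    · exact mul_nonpos_of_nonpos_of_nonneg (by linarith) (by linarith [hc_lb _ h])
    · simp [hg, h]
    · exact mul_nonpos_of_nonneg_of_nonpos (by linarith) (by linarith [hc_ub _ h])
  have hg_int : Integrable g μ := by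
    have : g = fun ω => (s (X ω) * f (X ω) - c * s (X ω)) - (f (X ω) - c) := by
      funext ω; simp only [hg]; ring
    rw [this]
    exact ((hsf_int.sub (hs_int.const_mul c)).sub (hf_int.sub (integrable_const c)))
  have hg_integral : ∫ ω, g ω ∂μ
      = ∫ ω, s (X ω) * f (X ω) ∂μ - ∫ ω, f (X ω) ∂μ := by
    have hrw : g = fun ω => (s (X ω) * f (X ω) - c * s (X ω)) - (f (X ω) - c) := by
      funext ω; simp only [hg]; ring
    have e1 : ∫ ω, ((s (X ω) * f (X ω) - c * s (X ω)) - (f (X ω) - c)) ∂μ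
        = (∫ ω, (s (X ω) * f (X ω) - c * s (X ω)) ∂μ) - ∫ ω, (f (X ω) - c) ∂μ :=
      integral_sub (hsf_int.sub (hs_int.const_mul c)) (hf_int.sub (integrable_const c))
    have e2 : ∫ ω, (s (X ω) * f (X ω) - c * s (X ω)) ∂μ
        = (∫ ω, s (X ω) * f (X ω) ∂μ) - ∫ ω, c * s (X ω) ∂μ :=
      integral_sub hsf_int (hs_int.const_mul c)
    have e3 : ∫ ω, (f (X ω) - c) ∂μ = (∫ ω, f (X ω) ∂μ) - ∫ (_ : Ω), c ∂μ :=
      integral_sub hf_int (integrable_const c)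
    have e4 : ∫ ω, c * s (X ω) ∂μ = c * ∫ ω, s (X ω) ∂μ := integral_const_mul c _
    have e5 : ∫ (_ : Ω), c ∂μ = c := by simp
    rw [hrw, e1, e2, e3, e4, e5, hs_mean]
    ring
  -- it suffices to show ∫ g < 0
  rw [← sub_neg, ← hg_integral]
  -- ∫ g ≤ 0
  have hle : ∫ ω, g ω ∂μ ≤ 0 := integral_nonpos hg_nonpos
  rcases lt_or_eq_of_le hle with h | h
  · exact h
  exfalso
  -- ∫ g = 0 with g ≤ 0 forces g = 0 a.e.
  have hgneg_int : Integrable (fun ω => -g ω) μ := hg_int.neg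
  have hgeq : (fun ω => -g ω) =ᵐ[μ] 0 := by
    refine (integral_eq_zero_iff_of_nonneg_ae
      (Filter.Eventually.of_forall fun ω => neg_nonneg.mpr (hg_nonpos ω)) hgneg_int).mp ?_
    have e6 : ∫ ω, -g ω ∂μ = -∫ ω, g ω ∂μ := integral_neg g
    rw [e6, h, neg_zero]
  have hgzero : ∀ᵐ ω ∂μ, g ω = 0 := by
    filter_upwards [hgeq] with ω hω
    simpa using neg_eq_zero.mp hω
  -- from g ω = 0 with s (X ω) ≠ 1, conclude f (X ω) = c
  have key : ∀ ω, g ω = 0 → s (X ω) ≠ 1 → f (X ω) = c := by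
    intro ω hω hne
    rcases mul_eq_zero.mp hω with h' | h'
    · exact absurd (by linarith [sub_eq_zero.mp h']) hne
    · linarith [sub_eq_zero.mp h']
  by_cases hsu : 1 < s u
  · -- A ⊆ {s > 1}, so c ≤ f u
    obtain ⟨ω₁, hω₁A, hω₁g⟩ := exists_mem_of_measure_pos_of_ae hu_pos hgzero
    have hs1 : 1 < s (X ω₁) := lt_of_lt_of_le hsu (hs_anti hω₁A)
    have hcfu : c ≤ f u := by
      have := key ω₁ hω₁g (ne_of_gt hs1)
      rw [← this]
      exact hf_mono hω₁A
    by_cases hsv : s v < 1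
    · -- B ⊆ {s < 1}, so f v ≤ c
      obtain ⟨ω₂, hω₂B, hω₂g⟩ := exists_mem_of_measure_pos_of_ae hv_pos hgzero
      have hs2 : s (X ω₂) < 1 := lt_of_le_of_lt (hs_anti hω₂B) hsv
      have : f v ≤ c := by
        have hfc := key ω₂ hω₂g (ne_of_lt hs2)
        rw [← hfc]
        exact hf_mono hω₂B
      linarith
    · push_neg at hsv
      -- show μ {s (X ω) < 1} > 0
      have hN_pos : 0 < μ {ω | s (X ω) < 1} := by
        by_contra hN
        push_neg at hN
        have hN0 : μ {ω | s (X ω) < 1} = 0 := le_antisymm hN zero_le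
        have hae : ∀ᵐ ω ∂μ, 1 ≤ s (X ω) := by
          rw [ae_iff]
          convert hN0 using 2
          ext ω; simp
        have hone : Integrable (fun ω => s (X ω) - 1) μ := hs_int.sub (integrable_const 1)
        have hzero : ∫ ω, (s (X ω) - 1) ∂μ = 0 := by
          rw [integral_sub hs_int (integrable_const 1), hs_mean]
          simp
        have haezero : (fun ω => s (X ω) - 1) =ᵐ[μ] 0 := by
          rw [← integral_eq_zero_iff_of_nonneg_ae ?_ hone]
          · exact hzero
          · filter_upwards [hae] with ω hω
            simpa using hω
        obtain ⟨ω, hωA, hω1⟩ := exists_mem_of_measure_pos_of_ae hu_pos haezero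
        have : 1 < s (X ω) := lt_of_lt_of_le hsu (hs_anti hωA)
        simp only [Pi.zero_apply] at hω1
        linarith
      obtain ⟨ω₂, hω₂N, hω₂g⟩ := exists_mem_of_measure_pos_of_ae hN_pos hgzero
      have hs2 : s (X ω₂) < 1 := hω₂N
      have hvlt : v < X ω₂ := by
        by_contra h'
        push_neg at h'
        exact absurd (hs_anti h') (not_le.mpr (lt_of_lt_of_le hs2 hsv))
      have : f v ≤ c := by
        have hfc := key ω₂ hω₂g (ne_of_lt hs2)
        rw [← hfc]
        exact hf_mono (le_of_lt hvlt)
      linarith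
  · push_neg at hsu
    have hsv : s v < 1 := lt_of_lt_of_le hs_strict hsu
    -- B ⊆ {s < 1}: f v ≤ c
    obtain ⟨ω₂, hω₂B, hω₂g⟩ := exists_mem_of_measure_pos_of_ae hv_pos hgzero
    have hs2 : s (X ω₂) < 1 := lt_of_le_of_lt (hs_anti hω₂B) hsv
    have hfvc : f v ≤ c := by
      have hfc := key ω₂ hω₂g (ne_of_lt hs2)
      rw [← hfc]
      exact hf_mono hω₂B
    -- a point in P: c ≤ f u
    obtain ⟨ω₁, hω₁P, hω₁g⟩ := exists_mem_of_measure_pos_of_ae hP_pos hgzero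
    have hs1 : 1 < s (X ω₁) := hω₁P
    have hxu : X ω₁ < u := by
      by_contra h'
      push_neg at h'
      exact absurd (hs_anti h') (not_le.mpr (lt_of_le_of_lt hsu hs1))
    have : c ≤ f u := by
      have hfc := key ω₁ hω₁g (ne_of_gt hs1)
      rw [← hfc]
      exact hf_mono (le_of_lt hxu)
    linarith
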